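/- Fix β > 0 and define F : ℝ × ℝ → ℂ by F(r, θ) = (β r)^{1/β} · (cos θ + i sin θ). Then for every r > 0, every θ ∈ ℝ, and every (a, b) ∈ ℝ × ℝ, the map F is differentiable at (r, θ) and ‖F(r,θ)‖^{2β − 2} · ‖(D F)_{(r,θ)}(a, b)‖² = a² + β² r² b², where (DF)_{(r,θ)} denotes the Fréchet derivative of F at (r, θ) and ‖·‖ the Euclidean (complex modulus) norm on ℂ. -/

import Mathlib

open Complex

/-- The polar change of coordinates for the 2-cone of angle `2πβ`: the pullback of the
conformally flat metric `|z|^{2β−2}|dz|²` under `F(r,θ) = (βr)^{1/β}(cos θ + i sin θ)`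
is `dr² + β²r²dθ²`. -/
theorem cone_metric_polar_coordinates
    (β : ℝ) (hβ : 0 < β)
    (F : ℝ × ℝ → ℂ)
    (hF : ∀ p : ℝ × ℝ, F p =
      (((β * p.1) ^ (1 / β : ℝ) : ℝ) : ℂ) *
        (((Real.cos p.2 : ℝ) : ℂ) + ((Real.sin p.2 : ℝ) : ℂ) * Complex.I)) :
    ∀ (r θ : ℝ), 0 < r → ∀ a b : ℝ,
      DifferentiableAt ℝ F (r, θ) ∧
      ‖F (r, θ)‖ ^ (2 * β - 2 : ℝ) * ‖fderiv ℝ F (r, θ) (a, b)‖ ^ 2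
        = a ^ 2 + β ^ 2 * r ^ 2 * b ^ 2 := by
  intro r θ hr a b
  have ht : 0 < β * r := mul_pos hβ hr
  set t := β * r with htdef
  have hFeq : F = fun p : ℝ × ℝ => (((β * p.1) ^ (1/β : ℝ) : ℝ) : ℂ) * Complex.exp (↑p.2 * I) := by
    funext p
    rw [hF p, Complex.exp_mul_I]
    simp [Complex.cos_ofReal_re, Complex.ofReal_cos, Complex.ofReal_sin]
  -- derivative of first factor
  set c' : ℝ := t ^ (1/β - 1 : ℝ) with hc'def
  have hu : HasDerivAt (fun x : ℝ => ((((β * x) ^ (1/β : ℝ) : ℝ)) : ℂ)) (c' : ℂ) r := by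
    have h1 : HasDerivAt (fun x : ℝ => β * x) β r := by simpa using (hasDerivAt_id r).const_mul β
    have h2 : HasDerivAt (fun y : ℝ => y ^ (1/β : ℝ)) ((1/β) * t ^ (1/β - 1 : ℝ)) t :=
      Real.hasDerivAt_rpow_const (Or.inl ht.ne')
    have h3 : HasDerivAt (fun x : ℝ => (β * x) ^ (1/β : ℝ)) ((1/β) * t ^ (1/β - 1 : ℝ) * β) r :=
      h2.comp r h1
    have h4 : (1/β) * t ^ (1/β - 1 : ℝ) * β = c' := by
      rw [hc'def, mul_comm _ β, ← mul_assoc, mul_one_div_cancel hβ.ne', one_mul]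
    exact (h4 ▸ h3).ofReal_comp
  have hv : HasDerivAt (fun y : ℝ => Complex.exp (↑y * I)) (Complex.exp (↑θ*I)*I) θ := by
    have h : HasDerivAt (fun z : ℂ => Complex.exp (z*I)) (Complex.exp ((θ:ℂ)*I)*I) (θ:ℂ) := by
      have hi : HasDerivAt (fun z : ℂ => z * I) I (θ:ℂ) := by simpa using (hasDerivAt_id (θ:ℂ)).mul_const I
      exact (Complex.hasDerivAt_exp ((θ:ℂ)*I)).comp (θ:ℂ) hi
    exact h.comp_ofReal
  have hA : HasFDerivAt (fun p : ℝ × ℝ => ((((β * p.1) ^ (1/β : ℝ) : ℝ)) : ℂ))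
      ((ContinuousLinearMap.smulRight (1 : ℝ →L[ℝ] ℝ) ((c' : ℂ))).comp (ContinuousLinearMap.fst ℝ ℝ ℝ)) (r, θ) :=
    hu.hasFDerivAt.comp (r, θ) (ContinuousLinearMap.fst ℝ ℝ ℝ).hasFDerivAt
  have hB : HasFDerivAt (fun p : ℝ × ℝ => Complex.exp (↑p.2 * I))
      ((ContinuousLinearMap.smulRight (1 : ℝ →L[ℝ] ℝ) (Complex.exp (↑θ*I)*I)).comp (ContinuousLinearMap.snd ℝ ℝ ℝ)) (r, θ) :=
    by have := hv.hasFDerivAt.comp (r, θ) (ContinuousLinearMap.snd ℝ ℝ ℝ).hasFDerivAt; exact this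
  set L : ℝ × ℝ →L[ℝ] ℂ :=
    (((β * r) ^ (1/β:ℝ):ℝ):ℂ) • ((ContinuousLinearMap.smulRight (1 : ℝ →L[ℝ] ℝ) (Complex.exp (↑θ*I)*I)).comp (ContinuousLinearMap.snd ℝ ℝ ℝ))
      + Complex.exp (↑θ*I) • ((ContinuousLinearMap.smulRight (1 : ℝ →L[ℝ] ℝ) ((c':ℂ))).comp (ContinuousLinearMap.fst ℝ ℝ ℝ)) with hLdef
  have hL : HasFDerivAt F L (r, θ) := by
    rw [hFeq]; exact hA.mul hB
  refine ⟨hL.differentiableAt, ?_⟩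
  rw [hL.fderiv]
  have hval : L (a, b) = Complex.exp (↑θ*I) * (((c' * a : ℝ) : ℂ) + ((t^(1/β:ℝ) * b : ℝ) : ℂ) * I) := by
    simp [hLdef, ContinuousLinearMap.smulRight_apply, smul_eq_mul, htdef]
    ring
  rw [hval]
  have hnorm1 : ‖Complex.exp (↑θ*I)‖ = 1 := by
    rw [Complex.norm_exp_ofReal_mul_I]
  have hnorm2 : ‖Complex.exp (↑θ*I) * (((c' * a : ℝ) : ℂ) + ((t^(1/β:ℝ) * b : ℝ) : ℂ) * I)‖ ^ 2
      = (c' * a)^2 + (t^(1/β:ℝ) * b)^2 := by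
    rw [norm_mul, hnorm1, one_mul, Complex.sq_norm, Complex.normSq_add_mul_I]
  rw [hnorm2]
  have hnormF : ‖F (r, θ)‖ = t ^ (1/β:ℝ) := by
    rw [hFeq]
    simp only []
    rw [norm_mul, hnorm1, mul_one, Complex.norm_real, Real.norm_eq_abs,
      _root_.abs_of_nonneg (Real.rpow_nonneg ht.le _)]
  rw [hnormF]
  -- final rpow arithmetic
  have hbne : β ≠ 0 := hβ.ne'
  rw [hc'def, mul_pow, mul_pow, ← Real.rpow_natCast (t ^ (1/β - 1 : ℝ)) 2,
    ← Real.rpow_natCast (t ^ (1/β : ℝ)) 2, ← Real.rpow_mul ht.le, ← Real.rpow_mul ht.le,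
    ← Real.rpow_mul ht.le]
  rw [mul_add, ← mul_assoc, ← mul_assoc, ← Real.rpow_add ht, ← Real.rpow_add ht]
  have e1 : (1/β) * (2*β - 2) + (1/β - 1) * (2:ℕ) = 0 := by field_simp; ring
  have e2 : (1/β) * (2*β - 2) + (1/β) * (2:ℕ) = 2 := by field_simp; push_cast; ring
  rw [e1, e2, Real.rpow_zero, one_mul]
  have : t ^ (2:ℝ) = β^2 * r^2 := by
    rw [show (2:ℝ) = ((2:ℕ):ℝ) by norm_num, Real.rpow_natCast, htdef, mul_pow]
  rw [this]
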